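/- With the path representation Cohn Λ-family {T_λ, T_{μ*}} on the free module 𝔽_R(W_Λ), for every r ∈ R \ {0} and every vertex v ∈ Λ⁰, one has r T_v ≠ 0 and r ∏_{e ∈ vΛ¹}(T_v - T_e T_{e*}) ≠ 0. -/

import Mathlib

/-- A higher-rank graph (`k`-graph): a small category with a degree functor to `ℕ^k`
satisfying the factorisation property.  Paths and vertices live in one type `Path`;
vertices are the paths of degree `0`. Composition is a total function which is only
meaningful on composable pairs. -/
structure KGraph (k : ℕ) where
  Path : Type
  src : Path → Path
  rng : Path → Path
  comp : Path → Path → Path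
  deg : Path → Fin k → ℕ
  deg_src : ∀ a, deg (src a) = 0
  deg_rng : ∀ a, deg (rng a) = 0
  src_vertex : ∀ a, deg a = 0 → src a = a
  rng_vertex : ∀ a, deg a = 0 → rng a = a
  comp_assoc : ∀ a b c, src a = rng b → src b = rng c →
    comp (comp a b) c = comp a (comp b c)
  rng_comp : ∀ a b, src a = rng b → rng (comp a b) = rng a
  src_comp : ∀ a b, src a = rng b → src (comp a b) = src b
  deg_comp : ∀ a b, src a = rng b → deg (comp a b) = deg a + deg b
  comp_rng_self : ∀ a, comp (rng a) a = a
  comp_src_self : ∀ a, comp a (src a) = a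
  factor : ∀ a (m n : Fin k → ℕ), deg a = m + n →
    ∃! p : Path × Path, src p.1 = rng p.2 ∧ comp p.1 p.2 = a ∧
      deg p.1 = m ∧ deg p.2 = n

namespace KGraph

variable {k : ℕ}

/-- `v` is a vertex iff it has degree `0`. -/
def IsVertex (Λ : KGraph k) (v : Λ.Path) : Prop := Λ.deg v = 0

/-- The set `vΛ¹` of edges (paths of degree `e_i` for some `i`) with range `v`. -/
def edgesAt (Λ : KGraph k) (v : Λ.Path) : Set Λ.Path :=
  {e | Λ.rng e = v ∧ ∃ i : Fin k, Λ.deg e = Pi.single i 1}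

/-- `Λ` is row-finite: each vertex receives finitely many edges. -/
def RowFinite (Λ : KGraph k) : Prop := ∀ v, (Λ.edgesAt v).Finite

/-- `Λ` has no sources: `vΛ^m ≠ ∅` for every vertex `v` and every `m ∈ ℕ^k`. -/
def NoSources (Λ : KGraph k) : Prop :=
  ∀ v, Λ.IsVertex v → ∀ m : Fin k → ℕ, ∃ a, Λ.rng a = v ∧ Λ.deg a = m

/-- `MCE(l, m)`: minimal common extensions of `l` and `m`. -/
def MCE (Λ : KGraph k) (l m : Λ.Path) : Set Λ.Path :=
  {t | Λ.deg t = Λ.deg l ⊔ Λ.deg m ∧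
    (∃ ν, Λ.src l = Λ.rng ν ∧ Λ.comp l ν = t) ∧
    (∃ γ, Λ.src m = Λ.rng γ ∧ Λ.comp m γ = t)}

/-- `Λ^min(l, m)`: pairs `(ν, γ)` with `lν = mγ ∈ MCE(l, m)`. -/
def MinPairs (Λ : KGraph k) (l m : Λ.Path) : Set (Λ.Path × Λ.Path) :=
  {p | Λ.src l = Λ.rng p.1 ∧ Λ.src m = Λ.rng p.2 ∧
    Λ.comp l p.1 = Λ.comp m p.2 ∧ Λ.comp l p.1 ∈ Λ.MCE l m}

/-- `E ⊆ vΛ` is exhaustive if every path with range `v` has a common extension with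
some member of `E`. -/
def IsExhaustive (Λ : KGraph k) (v : Λ.Path) (E : Set Λ.Path) : Prop :=
  ∀ a, Λ.rng a = v → ∃ μ ∈ E, (Λ.MinPairs a μ).Nonempty

end KGraph

/-- A Cohn `Λ`-family in a ring `A` : relations (CP1)–(CP3). -/
structure IsCohnFamily {k : ℕ} (Λ : KGraph k) (A : Type) [Ring A]
    (T Ts : Λ.Path → A) : Prop where
  ghost_vertex : ∀ v, Λ.IsVertex v → Ts v = T v
  vertex_idem : ∀ v, Λ.IsVertex v → T v * T v = T v
  vertex_orth : ∀ v w, Λ.IsVertex v → Λ.IsVertex w → v ≠ w → T v * T w = 0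
  mul_comp : ∀ a b, Λ.src a = Λ.rng b → T a * T b = T (Λ.comp a b)
  ghost_mul_comp : ∀ a b, Λ.src a = Λ.rng b → Ts b * Ts a = Ts (Λ.comp a b)
  cp3 : ∀ a b, Ts a * T b = ∑ᶠ p ∈ Λ.MinPairs a b, T p.1 * Ts p.2

/-- Product of the images of the elements of a finset, in some fixed enumeration.
(The products we take are over pairwise-commuting factors, so the order is immaterial.) -/
noncomputable def listProd {A : Type} [Monoid A] {ι : Type} (s : Finset ι) (f : ι → A) : A :=
  (s.toList.map f).prod

/-- `F_{T,v} := T_v - ∏_{e ∈ vΛ¹} (T_v - T_e T_{e*})`. -/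
noncomputable def FF {k : ℕ} (Λ : KGraph k) (hrf : Λ.RowFinite) {A : Type} [Ring A]
    (T Ts : Λ.Path → A) (v : Λ.Path) : A :=
  T v - listProd (hrf v).toFinset (fun e => T v - T e * Ts e)

/-- The path space `W_Λ` of a `k`-graph `Λ`: the set of all (finite and infinite)
paths, i.e. degree-preserving functors `x : Ω_{k,n} → Λ` for `n ∈ (ℕ∪{∞})^k`,
presented by its structural operations: range `rW`, degree `dW : W → (ℕ∪{∞})^k`,
concatenation `cons λ x = λx` (for `s(λ) = r(x)`), shift `σ^n x`, initial segment
`seg x n = x(0,n)` (for `n ≤ d(x)`), and the embedding `ofPath` of finite paths. -/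
structure PathSpace {k : ℕ} (Λ : KGraph k) where
  W : Type
  rW : W → Λ.Path
  dW : W → Fin k → ℕ∞
  rW_vertex : ∀ x, Λ.IsVertex (rW x)
  cons : Λ.Path → W → W
  shift : (Fin k → ℕ) → W → W
  seg : W → (Fin k → ℕ) → Λ.Path
  ofPath : Λ.Path → W
  rW_cons : ∀ a x, Λ.src a = rW x → rW (cons a x) = Λ.rng a
  dW_cons : ∀ a x, Λ.src a = rW x →
    dW (cons a x) = fun i => (Λ.deg a i : ℕ∞) + dW x i
  cons_vertex : ∀ v x, Λ.IsVertex v → v = rW x → cons v x = x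
  cons_comp : ∀ a b x, Λ.src a = Λ.rng b → Λ.src b = rW x →
    cons (Λ.comp a b) x = cons a (cons b x)
  seg_deg : ∀ x n, (∀ i, (n i : ℕ∞) ≤ dW x i) → Λ.deg (seg x n) = n
  seg_rng : ∀ x n, (∀ i, (n i : ℕ∞) ≤ dW x i) → Λ.rng (seg x n) = rW x
  seg_zero : ∀ x, seg x 0 = rW x
  cons_seg_shift : ∀ x n, (∀ i, (n i : ℕ∞) ≤ dW x i) →
    cons (seg x n) (shift n x) = x
  rW_shift : ∀ x n, (∀ i, (n i : ℕ∞) ≤ dW x i) → rW (shift n x) = Λ.src (seg x n)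
  dW_shift : ∀ x n, (∀ i, (n i : ℕ∞) ≤ dW x i) →
    dW (shift n x) = fun i => dW x i - (n i : ℕ∞)
  shift_zero : ∀ x, shift 0 x = x
  shift_shift : ∀ x m n, (∀ i, ((m i + n i : ℕ) : ℕ∞) ≤ dW x i) →
    shift n (shift m x) = shift (m + n) x
  seg_cons : ∀ a x, Λ.src a = rW x → seg (cons a x) (Λ.deg a) = a
  shift_cons : ∀ a x, Λ.src a = rW x → shift (Λ.deg a) (cons a x) = x
  rW_ofPath : ∀ a, rW (ofPath a) = Λ.rng a
  dW_ofPath : ∀ a, dW (ofPath a) = fun i => (Λ.deg a i : ℕ∞)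
  seg_ofPath : ∀ a, seg (ofPath a) (Λ.deg a) = a

open scoped Classical

/-- The endomorphism `T_λ` of the free module `𝔽_R(W_Λ)`:
`T_λ(x) = λx` if `s(λ) = r(x)` and `0` otherwise (for a vertex `v` this is
`T_v(x) = x` if `r(x) = v` and `0` otherwise). -/
noncomputable def repT {k : ℕ} {Λ : KGraph k} (P : PathSpace Λ) (R : Type)
    [CommRing R] (a : Λ.Path) : Module.End R (P.W →₀ R) :=
  Finsupp.lsum R fun x =>
    if Λ.src a = P.rW x then (Finsupp.lsingle (P.cons a x) : R →ₗ[R] (P.W →₀ R))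
    else 0

/-- The endomorphism `T_{μ*}` of the free module `𝔽_R(W_Λ)`:
`T_{μ*}(x) = σ^{d(μ)} x` if `x(0, d(μ)) = μ` and `0` otherwise. -/
noncomputable def repTs {k : ℕ} {Λ : KGraph k} (P : PathSpace Λ) (R : Type)
    [CommRing R] (a : Λ.Path) : Module.End R (P.W →₀ R) :=
  Finsupp.lsum R fun x =>
    if (∀ i, (Λ.deg a i : ℕ∞) ≤ P.dW x i) ∧ P.seg x (Λ.deg a) = a then
      (Finsupp.lsingle (P.shift (Λ.deg a) x) : R →ₗ[R] (P.W →₀ R))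
    else 0

/-- For the path representation Cohn `Λ`-family on the free module `𝔽_R(W_Λ)`,
for every `r ∈ R \ {0}` and every vertex `v ∈ Λ⁰`, both `r T_v ≠ 0` and
`r ∏_{e ∈ vΛ¹}(T_v - T_e T_{e*}) ≠ 0`. -/
theorem path_representation_nonvanishing {k : ℕ} (Λ : KGraph k)
    (hrf : Λ.RowFinite) (hns : Λ.NoSources) (P : PathSpace Λ)
    (R : Type) [CommRing R] :
    ∀ r : R, r ≠ 0 → ∀ v, Λ.IsVertex v →
      r • repT P R v ≠ 0 ∧
      r • listProd (hrf v).toFinset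
          (fun e => repT P R v - repT P R e * repTs P R e) ≠ 0 := by
  intro r hr v hv
  classical
  set x : P.W := P.ofPath v with hx
  have hrx : P.rW x = v := by rw [P.rW_ofPath]; exact Λ.rng_vertex v hv
  have hdx : ∀ i, P.dW x i = 0 := by
    intro i
    rw [P.dW_ofPath]
    simp [hv, KGraph.IsVertex] at *
    rw [hv]; simp
  have hTv : ∀ s : R, repT P R v (Finsupp.single x s) = Finsupp.single x s := by
    intro s
    rw [repT, Finsupp.lsum_single]
    rw [if_pos (by rw [Λ.src_vertex v hv, hrx])]
    simp [P.cons_vertex v x hv hrx.symm]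
  have hkey : ∀ s : R, ∀ e ∈ (hrf v).toFinset,
      (repT P R v - repT P R e * repTs P R e) (Finsupp.single x s)
        = Finsupp.single x s := by
    intro s e he
    rw [(hrf v).mem_toFinset] at he
    obtain ⟨-, i, hdi⟩ := he
    have hTs : repTs P R e (Finsupp.single x s) = 0 := by
      rw [repTs, Finsupp.lsum_single]
      rw [if_neg]
      · simp
      · rintro ⟨h1, -⟩
        have := h1 i
        rw [hdx i, hdi] at this
        simp at this
    simp only [LinearMap.sub_apply, Module.End.mul_apply, hTs, map_zero, sub_zero, hTv]
  have hprod : ∀ s : R, ∀ l : List Λ.Path, (∀ e ∈ l, e ∈ (hrf v).toFinset) →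
      ((l.map (fun e => repT P R v - repT P R e * repTs P R e)).prod)
        (Finsupp.single x s) = Finsupp.single x s := by
    intro s l
    induction l with
    | nil => intro _; simp
    | cons a t ih =>
      intro h
      simp only [List.map_cons, List.prod_cons, Module.End.mul_apply]
      rw [ih (fun e he => h e (List.mem_cons_of_mem a he)), hkey s a (h a (List.mem_cons_self))]
  constructor
  · intro h0
    have := congrArg (fun M : Module.End R (P.W →₀ R) => M (Finsupp.single x 1)) h0
    simp only [LinearMap.smul_apply, LinearMap.zero_apply] at this
    rw [hTv 1] at this
    rw [Finsupp.smul_single, smul_eq_mul, mul_one] at this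
    exact hr (Finsupp.single_eq_zero.mp this)
  · intro h0
    have := congrArg (fun M : Module.End R (P.W →₀ R) => M (Finsupp.single x 1)) h0
    simp only [LinearMap.smul_apply, LinearMap.zero_apply] at this
    rw [listProd] at this
    rw [hprod 1 _ (fun e he => (Finset.mem_toList).mp he)] at this
    rw [Finsupp.smul_single, smul_eq_mul, mul_one] at this
    exact hr (Finsupp.single_eq_zero.mp this)
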